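/- Let A_G be the Tutte matrix of a simple undirected graph G on n vertices, considered over a field of characteristic two (entries x_{ij} = x_{ji} for edges ij, 0 otherwise, with distinct indeterminates per edge). Then det A_G, as a polynomial, is nonzero if and only if G has a perfect matching. -/

import Mathlib

open Finset MvPolynomial

/-- Tutte's theorem over characteristic two: the determinant of the (symmetric) Tutte
matrix of a simple graph `G`, with a distinct indeterminate `x_{ij}` for every edge
`ij`, is a nonzero polynomial if and only if `G` has a perfect matching. -/
theorem tutte_matrix_det_ne_zero_iff_perfectMatching {F : Type*} [Field F] [CharP F 2]
    {n : ℕ} (G : SimpleGraph (Fin n)) [DecidableRel G.Adj]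
    (A : Matrix (Fin n) (Fin n) (MvPolynomial (Sym2 (Fin n)) F))
    (hA : ∀ i j, A i j = if G.Adj i j then MvPolynomial.X s(i, j) else 0) :
    A.det ≠ 0 ↔ ∃ M : G.Subgraph, M.IsPerfectMatching := by
  classical
  have hchar : CharP (MvPolynomial (Sym2 (Fin n)) F) 2 := inferInstance
  -- symmetry of A
  have hsymm : ∀ i j, A i j = A j i := by
    intro i j
    rw [hA, hA]
    by_cases h : G.Adj i j
    · simp [h, h.symm, Sym2.eq_swap]
    · rw [if_neg h, if_neg (fun h' => h h'.symm)]
  set f : Equiv.Perm (Fin n) → MvPolynomial (Sym2 (Fin n)) F := fun σ => ∏ i, A (σ i) i with hf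
  -- determinant as plain sum (signs vanish in char 2)
  have hdet : A.det = ∑ σ : Equiv.Perm (Fin n), f σ := by
    rw [Matrix.det_apply]
    refine Finset.sum_congr rfl fun σ _ => ?_
    rcases Int.units_eq_one_or (Equiv.Perm.sign σ) with h | h <;>
      rw [h] <;> simp [Units.smul_def, CharTwo.neg_eq, hf]
  have hfinv : ∀ σ : Equiv.Perm (Fin n), f σ⁻¹ = f σ := by
    intro σ
    calc (∏ i, A (σ⁻¹ i) i) = ∏ i, A (σ⁻¹ (σ i)) (σ i) := (Equiv.prod_comp σ _).symm
    _ = ∏ i, A (σ i) i := by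
        refine Finset.prod_congr rfl fun i _ => ?_
        rw [Equiv.Perm.inv_def, Equiv.symm_apply_apply]
        exact hsymm i (σ i)
  -- non-involutions cancel
  have hzero : ∑ σ ∈ Finset.univ.filter (fun σ : Equiv.Perm (Fin n) => ¬ σ⁻¹ = σ), f σ = 0 := by
    refine Finset.sum_involution (fun σ _ => σ⁻¹) (fun σ _ => ?_) (fun σ hσ _ => ?_)
      (fun σ hσ => ?_) (fun σ hσ => inv_inv σ)
    · rw [hfinv]; exact CharTwo.add_self_eq_zero _
    · exact (Finset.mem_filter.mp hσ).2
    · simp only [Finset.mem_filter, Finset.mem_univ, true_and, inv_inv] at *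
      exact fun h => hσ h.symm
  have hdet2 : A.det = ∑ σ ∈ Finset.univ.filter (fun σ : Equiv.Perm (Fin n) => σ⁻¹ = σ), f σ := by
    rw [hdet, ← Finset.sum_filter_add_sum_filter_not Finset.univ
      (fun σ : Equiv.Perm (Fin n) => σ⁻¹ = σ) f, hzero, add_zero]
  constructor
  · -- forward: det ≠ 0 → perfect matching
    intro hne
    rw [hdet2] at hne
    obtain ⟨σ, hσmem, hσne⟩ := Finset.exists_ne_zero_of_sum_ne_zero hne
    have hσinv : σ⁻¹ = σ := (Finset.mem_filter.mp hσmem).2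
    have hadj : ∀ i, G.Adj (σ i) i := by
      intro i
      by_contra h
      exact hσne (Finset.prod_eq_zero (Finset.mem_univ i) (by rw [hA]; simp [h]))
    have hσσ : ∀ a, σ (σ a) = a := by
      intro a
      have : σ⁻¹ (σ a) = a := by rw [Equiv.Perm.inv_def, Equiv.symm_apply_apply]
      rwa [hσinv] at this
    refine ⟨⟨Set.univ, fun a b => G.Adj a b ∧ σ a = b, fun h => h.1,
      fun _ => trivial, ?_⟩, ?_, fun v => trivial⟩
    · constructor; rintro a b ⟨hab, rfl⟩
      exact ⟨hab.symm, hσσ a⟩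
    · intro v _
      exact ⟨σ v, ⟨(hadj v).symm, rfl⟩, fun w hw => hw.2.symm⟩
  · -- backward: perfect matching → det ≠ 0
    rintro ⟨M, hM⟩ hdz
    set m : Fin n → Fin n := fun v => (hM.1 (hM.2 v)).choose with hm
    have hmadj : ∀ v, M.Adj v (m v) := fun v => (hM.1 (hM.2 v)).choose_spec.1
    have hmuniq : ∀ v w, M.Adj v w → w = m v := fun v w h =>
      (hM.1 (hM.2 v)).choose_spec.2 w h
    have hminv : Function.Involutive m := by
      intro v
      exact (hmuniq (m v) v (hmadj v).symm).symm
    set σ : Equiv.Perm (Fin n) := hminv.toPerm m with hσ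
    set g : Sym2 (Fin n) → F := fun e => if e ∈ M.edgeSet then (1 : F) else 0 with hg
    have hmap : A.map (MvPolynomial.eval g) = σ.permMatrix F := by
      ext i j
      rw [Matrix.map_apply, hA, Equiv.Perm.permMatrix, PEquiv.toMatrix_toPEquiv_apply,
        Pi.single_apply]
      have hσi : σ i = m i := rfl
      by_cases hMij : M.Adj i j
      · have hgij : G.Adj i j := M.adj_sub hMij
        have : s(i, j) ∈ M.edgeSet := SimpleGraph.Subgraph.mem_edgeSet.mpr hMij
        rw [hσi, ← hmuniq i j hMij]
        simp [hgij, hg, this]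
      · have hne : ¬ σ i = j := by
          rw [hσi]
          rintro rfl
          exact hMij (hmadj i)
        have : s(i, j) ∉ M.edgeSet := fun h => hMij (SimpleGraph.Subgraph.mem_edgeSet.mp h)
        by_cases hgij : G.Adj i j <;> simp [hgij, hg, this, Ne.symm hne]
    have : ((Equiv.Perm.sign σ : ℤ) : F) ≠ 0 := by
      rcases Int.units_eq_one_or (Equiv.Perm.sign σ) with h | h <;> rw [h] <;>
        simp [CharTwo.neg_eq]
    apply this
    rw [← Matrix.det_permutation, ← hmap, ← RingHom.mapMatrix_apply, ← RingHom.map_det, hdz, map_zero]
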